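/- Sufficient criterion for irreducible hidden entanglement: let Σ be a 2N×2N real matrix with mode-ordered correlation blocks σ_jk. If there exist indices j₀ ≠ k₀ with det(σ_{j₀k₀}) > 0, then there exist NO real 2×2 matrices S₁,…,S_N of determinant 1, positive reals λ₁,…,λ_N, symmetric real N×N matrix V, and reals c_jk such that S_j · σ_jk · S_kᵀ = [[0, λ_j V_jk],[λ_k V_jk, c_jk]] for all j ≠ k; i.e., the corresponding Gaussian state is not GLU-equivalent to any graph state. -/
import Mathlib


open Matrix

/-- The mode-ordered 2×2 correlation block `σ_jk` of a quadrature-ordered covariance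
matrix: it collects the `(Q_j,P_j)–(Q_k,P_k)` covariances. -/
def modeBlock {N : ℕ} (A : Matrix (Fin N ⊕ Fin N) (Fin N ⊕ Fin N) ℝ) (j k : Fin N) :
    Matrix (Fin 2) (Fin 2) ℝ :=
  !![A (Sum.inl j) (Sum.inl k), A (Sum.inl j) (Sum.inr k);
     A (Sum.inr j) (Sum.inl k), A (Sum.inr j) (Sum.inr k)]

/-- sufficient criterion for irreducible hidden entanglement: if some
off-diagonal mode-ordered block `σ_{j₀k₀}` of `Σ` has positive determinant, then there
exist no GLUs `S_j` (real 2×2 matrices of determinant 1), positive reals `λ_j`, symmetric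
`V`, and reals `c_jk` bringing all blocks to the graph-state form
`S_j σ_jk S_kᵀ = [[0, λ_j V_jk],[λ_k V_jk, c_jk]]`; i.e. the state is not
GLU-equivalent to any graph state. -/
theorem not_GLU_equiv_graphState_of_det_pos {N : ℕ}
    (Sig : Matrix (Fin N ⊕ Fin N) (Fin N ⊕ Fin N) ℝ)
    (j₀ k₀ : Fin N) (hjk : j₀ ≠ k₀)
    (hpos : 0 < (modeBlock Sig j₀ k₀).det) :
    ¬ ∃ (S : Fin N → Matrix (Fin 2) (Fin 2) ℝ) (lam : Fin N → ℝ)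
        (V : Matrix (Fin N) (Fin N) ℝ) (c : Fin N → Fin N → ℝ),
        (∀ j, (S j).det = 1) ∧ (∀ j, 0 < lam j) ∧ V.IsSymm ∧
        (∀ j k, j ≠ k →
          S j * modeBlock Sig j k * (S k)ᵀ
            = !![0, lam j * V j k; lam k * V j k, c j k]) := by
  rintro ⟨S, lam, V, c, hS, hlam, hV, h⟩
  have heq := congrArg Matrix.det (h j₀ k₀ hjk)
  rw [Matrix.det_mul, Matrix.det_mul, hS j₀, Matrix.det_transpose, hS k₀,
    one_mul, mul_one, Matrix.det_fin_two_of] at heq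
  have hle : (0:ℝ) * c j₀ k₀ - lam j₀ * V j₀ k₀ * (lam k₀ * V j₀ k₀) ≤ 0 := by
    nlinarith [mul_nonneg (mul_pos (hlam j₀) (hlam k₀)).le (sq_nonneg (V j₀ k₀))]
  linarith [heq ▸ hpos, hle]
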